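/- arXiv:2510.15699 — 3 statements merged into one kernel-verified Lean document; each statement's English description precedes it below -/
import Mathlib

section
/- Let a ∈ ℝ and ρ > 0. Define h : ℝ → ℝ by h(λ) = λ·max{a, −λ/ρ} + (ρ/2)·max{a, −λ/ρ}². Then h is differentiable at every λ ∈ ℝ with derivative h′(λ) = max{a, −λ/ρ}; in particular, since λ ↦ max{a, −λ/ρ} is continuous, h is continuously differentiable on ℝ. -/
lemma maxsq_hasDerivAt (x : ℝ) :
    HasDerivAt (fun y : ℝ => max y 0 ^ 2) (2 * max x 0) x := by
  rcases lt_trichotomy x 0 with hx | hx | hx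
  · have : max x 0 = 0 := max_eq_right hx.le
    rw [this, mul_zero]
    have hev : (fun y : ℝ => max y 0 ^ 2) =ᶠ[nhds x] fun _ => (0 : ℝ) := by
      filter_upwards [Iio_mem_nhds hx] with y hy
      simp [max_eq_right (le_of_lt (Set.mem_Iio.mp hy))]
    exact (hasDerivAt_const x (0 : ℝ)).congr_of_eventuallyEq hev
  · subst hx
    rw [max_self, mul_zero]
    rw [hasDerivAt_iff_isLittleO]
    simp only [sub_zero, max_self, ne_eq, OfNat.ofNat_ne_zero, not_false_eq_true,
      zero_pow, smul_zero, sub_zero]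
    rw [Asymptotics.isLittleO_iff]
    intro c hc
    filter_upwards [Metric.ball_mem_nhds (0 : ℝ) hc] with y hy
    have h1 : |max y 0 ^ 2| ≤ |y| * |y| := by
      rw [abs_of_nonneg (by positivity), sq]
      have hm : max y 0 ≤ |y| := max_le (le_abs_self y) (abs_nonneg y)
      exact mul_le_mul hm hm (le_max_right y 0) (abs_nonneg y)
    have h2 : |y| < c := by simpa [Real.dist_eq] using hy
    calc ‖max y 0 ^ 2‖ ≤ |y| * |y| := h1
      _ ≤ c * ‖y‖ := by
        apply mul_le_mul_of_nonneg_right h2.le (abs_nonneg y)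
  · have : max x 0 = x := max_eq_left hx.le
    rw [this]
    have hev : (fun y : ℝ => max y 0 ^ 2) =ᶠ[nhds x] fun y => y ^ 2 := by
      filter_upwards [Ioi_mem_nhds hx] with y hy
      simp [max_eq_left (le_of_lt (Set.mem_Ioi.mp hy))]
    have h2 : HasDerivAt (fun y : ℝ => y ^ 2) (2 * x) x := by
      simpa using hasDerivAt_pow 2 x
    exact h2.congr_of_eventuallyEq hev

/-- Scalar core of the dual-gradient computation: for `a ∈ ℝ`, `ρ > 0`, the function
`h(λ) = λ·max{a, −λ/ρ} + (ρ/2)·max{a, −λ/ρ}²` is differentiable everywhere with derivative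
`max{a, −λ/ρ}`, and in particular continuously differentiable on `ℝ`. -/
theorem stmt_0 (a ρ : ℝ) (hρ : 0 < ρ) (h : ℝ → ℝ)
    (hdef : ∀ l : ℝ, h l = l * max a (-l / ρ) + (ρ / 2) * (max a (-l / ρ)) ^ 2) :
    (∀ l : ℝ, HasDerivAt h (max a (-l / ρ)) l) ∧
      (Continuous fun l : ℝ => max a (-l / ρ)) ∧ ContDiff ℝ 1 h := by
  have hρ' : ρ ≠ 0 := ne_of_gt hρ
  have hmax : ∀ l : ℝ, max (a + l / ρ) 0 = max a (-l / ρ) + l / ρ := by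
    intro l
    have : (0 : ℝ) = -l / ρ + l / ρ := by ring
    rw [this, max_add_add_right]
  have heq : h = fun l => ρ / 2 * max (a + l / ρ) 0 ^ 2 - l ^ 2 / (2 * ρ) := by
    funext l
    rw [hdef l, hmax l]
    field_simp
    ring
  have key : ∀ l : ℝ, HasDerivAt h (max a (-l / ρ)) l := by
    intro l
    rw [heq]
    have h1 : HasDerivAt (fun l : ℝ => a + l / ρ) (1 / ρ) l := by
      simpa using (hasDerivAt_id l).div_const ρ |>.const_add a
    have h2 := (maxsq_hasDerivAt (a + l / ρ)).comp l h1
    have h3 := h2.const_mul (ρ / 2)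
    have h4 : HasDerivAt (fun l : ℝ => l ^ 2 / (2 * ρ)) (2 * l / (2 * ρ)) l := by
      simpa using (hasDerivAt_pow 2 l).div_const (2 * ρ)
    have h5 := h3.sub h4
    convert h5 using 1
    case e'_4 => rfl
    case e'_5 => rfl
    case e'_8 => rfl
    rw [hmax l]
    field_simp
    ring
  have hcont : Continuous fun l : ℝ => max a (-l / ρ) :=
    continuous_const.max ((continuous_neg.div_const ρ))
  refine ⟨key, hcont, ?_⟩
  rw [contDiff_one_iff_deriv]
  constructor
  · exact fun l => (key l).differentiableAt
  · have : deriv h = fun l => max a (-l / ρ) := funext fun l => (key l).deriv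
    rw [this]; exact hcont
end

section
/- Fix i₀ ∈ [n] and j₀ ∈ [q], and fix δ ∈ ℝ^d, all dual variables other than λ_{i₀,j₀}, and all penalty parameters. Then the map λ_{i₀,j₀} ↦ L(δ, Λ, μ, P, p) is differentiable at every λ_{i₀,j₀} ∈ ℝ, with partial derivative ∂L/∂λ_{i₀,j₀} = ζ(δ, λ_{i₀,j₀}, ρ_{i₀,j₀}) = max{g_{j₀}(x_{i₀}+δ) − b_{j₀}, −λ_{i₀,j₀}/ρ_{i₀,j₀}}. -/
open scoped BigOperators


lemma sq_max_deriv (t : ℝ) : HasDerivAt (fun x : ℝ => (max x 0)^2) (2 * max t 0) t := by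
  rcases lt_trichotomy t 0 with h | h | h
  · have hc : HasDerivAt (fun _ : ℝ => (0:ℝ)) 0 t := hasDerivAt_const t 0
    have heq : (fun x : ℝ => (max x 0)^2) =ᶠ[nhds t] fun _ => (0:ℝ) := by
      filter_upwards [eventually_lt_nhds h] with x hx
      rw [max_eq_right hx.le]; ring
    have := hc.congr_of_eventuallyEq heq
    simpa [max_eq_right h.le] using this
  · subst h
    rw [hasDerivAt_iff_isLittleO]
    rw [Asymptotics.isLittleO_iff]
    intro c hc
    filter_upwards [Metric.ball_mem_nhds 0 hc] with x hx
    simp only [Metric.mem_ball, Real.dist_eq, sub_zero] at hx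
    have hz : max (0:ℝ) 0 = 0 := max_self 0
    simp only [Real.norm_eq_abs, hz, sub_zero, smul_eq_mul, mul_zero]
    norm_num
    have h1 : max x 0 ^ 2 ≤ |x| * |x| := by
      rw [sq]
      rcases le_or_gt x 0 with h | h
      · rw [max_eq_right h]; simpa using mul_self_nonneg |x|
      · rw [max_eq_left h.le, ← abs_of_pos h]; simp [abs_abs]
    calc max x 0 ^ 2 ≤ |x| * |x| := h1
      _ ≤ c * |x| := by nlinarith [abs_nonneg x]
  · have hx2 : HasDerivAt (fun x : ℝ => x^2) (2*t) t := by
      simpa using (hasDerivAt_pow 2 t)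
    have heq : (fun x : ℝ => (max x 0)^2) =ᶠ[nhds t] fun x => x^2 := by
      filter_upwards [eventually_gt_nhds h] with x hx
      rw [max_eq_left hx.le]
    have := hx2.congr_of_eventuallyEq heq
    simpa [max_eq_left h.le] using this

lemma key_deriv (a ρ : ℝ) (hρ : 0 < ρ) (t : ℝ) :
    HasDerivAt (fun s : ℝ => s * max a (-s/ρ) + 1/2 * (ρ * (max a (-s/ρ))^2))
      (max a (-t/ρ)) t := by
  have hne : ρ ≠ 0 := hρ.ne'
  have hid : ∀ s : ℝ, s * max a (-s/ρ) + 1/2 * (ρ * (max a (-s/ρ))^2)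
      = ρ/2 * (max (a + s/ρ) 0)^2 - s^2/(2*ρ) := by
    intro s
    have hm : max (a + s/ρ) 0 = max a (-s/ρ) + s/ρ := by
      rw [← max_add_add_right]; ring_nf
    rw [hm]; field_simp; ring
  have hinner : HasDerivAt (fun s : ℝ => a + s/ρ) (1/ρ) t := by
    simpa using ((hasDerivAt_id t).div_const ρ).const_add a
  have hcomp : HasDerivAt (fun s : ℝ => (max (a + s/ρ) 0)^2)
      (2 * max (a + t/ρ) 0 * (1/ρ)) t :=
    by have h := (sq_max_deriv (a + t/ρ)).comp t hinner; exact h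
  have hq : HasDerivAt (fun s : ℝ => s^2/(2*ρ)) (2*t/(2*ρ)) t := by
    simpa using (hasDerivAt_pow 2 t).div_const (2*ρ)
  have hsum := (hcomp.const_mul (ρ/2)).sub hq
  have hmax : max (a + t/ρ) 0 = max a (-t/ρ) + t/ρ := by
    rw [← max_add_add_right]; ring_nf
  have hder : ρ/2 * (2 * max (a + t/ρ) 0 * (1/ρ)) - 2*t/(2*ρ) = max a (-t/ρ) := by
    rw [hmax]; field_simp; ring
  rw [hder] at hsum
  exact hsum.congr_of_eventuallyEq (Filter.Eventually.of_forall fun s => (hid s))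

/-- Dual gradient of the universal augmented Lagrangian with respect to a single dual
variable `λ_{i₀,j₀}`: fixing `δ`, all other dual variables, and all penalty parameters, the
map `λ_{i₀,j₀} ↦ L(δ, Λ, μ, P, p)` is differentiable at every point `t ∈ ℝ` with derivative
`ζ(δ, t, ρ_{i₀,j₀}) = max{g_{j₀}(x_{i₀}+δ) − b_{j₀}, −t/ρ_{i₀,j₀}}`. -/
theorem stmt_1 {d n q : ℕ}
    (x : Fin n → EuclideanSpace ℝ (Fin d)) (y : ℝ) (hy : y = 1 ∨ y = -1)
    (f : EuclideanSpace ℝ (Fin d) → ℝ)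
    (g : Fin q → EuclideanSpace ℝ (Fin d) → ℝ)
    (b : Fin q → ℝ) (c : ℝ)
    (δ : EuclideanSpace ℝ (Fin d))
    (Λ : Fin n → Fin q → ℝ) (μ : Fin n → ℝ)
    (P : Fin n → Fin q → ℝ) (hP : ∀ i j, 0 < P i j)
    (p : Fin n → ℝ) (hp : ∀ i, 0 < p i)
    (L : (Fin n → Fin q → ℝ) → ℝ)
    (hL : ∀ Λ' : Fin n → Fin q → ℝ,
      L Λ' = (1 / 2) * ‖δ‖ ^ 2
        + ∑ i, ∑ j, Λ' i j * max (g j (x i + δ) - b j) (-Λ' i j / P i j)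
        + ∑ i, μ i * max (y * f (x i + δ) - c) (-μ i / p i)
        + (1 / 2) * ∑ i, ∑ j, P i j * (max (g j (x i + δ) - b j) (-Λ' i j / P i j)) ^ 2
        + (1 / 2) * ∑ i, p i * (max (y * f (x i + δ) - c) (-μ i / p i)) ^ 2)
    (i₀ : Fin n) (j₀ : Fin q) :
    ∀ t : ℝ, HasDerivAt
      (fun s : ℝ => L (Function.update Λ i₀ (Function.update (Λ i₀) j₀ s)))
      (max (g j₀ (x i₀ + δ) - b j₀) (-t / P i₀ j₀)) t := by
  intro t
  set K : ℝ := (1/2) * ‖δ‖^2 + ∑ i, μ i * max (y * f (x i + δ) - c) (-μ i / p i)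
      + (1/2) * ∑ i, p i * (max (y * f (x i + δ) - c) (-μ i / p i))^2 with hK
  set u : ℝ → Fin n → Fin q → ℝ :=
      fun s => Function.update Λ i₀ (Function.update (Λ i₀) j₀ s) with hu
  have hrw : (fun s : ℝ => L (u s))
      = fun s : ℝ => K + ∑ i, ∑ j,
          (u s i j * max (g j (x i + δ) - b j) (-u s i j / P i j)
            + 1/2 * (P i j * (max (g j (x i + δ) - b j) (-u s i j / P i j))^2)) := by
    funext s
    rw [hL, hK]
    simp only [Finset.mul_sum, Finset.sum_add_distrib]
    ring
  rw [hrw]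
  have hsum : HasDerivAt
      (fun s : ℝ => ∑ i, ∑ j,
          (u s i j * max (g j (x i + δ) - b j) (-u s i j / P i j)
            + 1/2 * (P i j * (max (g j (x i + δ) - b j) (-u s i j / P i j))^2)))
      (∑ i, ∑ j, (if i = i₀ then (if j = j₀ then
          max (g j₀ (x i₀ + δ) - b j₀) (-t / P i₀ j₀) else 0) else 0)) t := by
    apply HasDerivAt.fun_sum
    intro i _
    apply HasDerivAt.fun_sum
    intro j _
    by_cases hi : i = i₀
    · subst hi
      by_cases hj : j = j₀
      · subst hj
        simp only [hu, Function.update_self, if_pos rfl]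
        exact key_deriv _ _ (hP i j) t
      · simp only [hu, Function.update_self, Function.update_of_ne hj, if_pos rfl, if_neg hj]
        exact hasDerivAt_const t _
    · simp only [hu, Function.update_of_ne hi, if_neg hi]
      exact hasDerivAt_const t _
  have hD : (∑ i, ∑ j, (if i = i₀ then (if j = j₀ then
      max (g j₀ (x i₀ + δ) - b j₀) (-t / P i₀ j₀) else 0) else 0))
      = max (g j₀ (x i₀ + δ) - b j₀) (-t / P i₀ j₀) := by
    simp [Finset.sum_ite_eq']
  rw [hD] at hsum
  exact hsum.const_add K
end

section
/- Suppose f and each g_j (j ∈ [q]) are differentiable on ℝ^d. Fix dual variables λ_{i,j}, μ_i ∈ ℝ and penalty parameters ρ_{i,j} > 0, ϱ_i > 0. Then the map δ ↦ L(δ, Λ, μ, P, p) is differentiable at every δ ∈ ℝ^d, with gradient ∇_δ L = δ + Σ_{i=1}^n Σ_{j=1}^q max{0, λ_{i,j} + ρ_{i,j}·(g_j(x_i+δ) − b_j)}·∇g_j(x_i+δ) + Σ_{i=1}^n max{0, μ_i + ϱ_i·(y·f(x_i+δ) − c)}·y·∇f(x_i+δ). -/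
open scoped BigOperators

lemma sqmax_hasDerivAt (t : ℝ) :
    HasDerivAt (fun s : ℝ => max 0 s ^ 2) (2 * max 0 t) t := by
  rcases lt_trichotomy t 0 with ht | rfl | ht
  · have h0 : HasDerivAt (fun _ : ℝ => (0 : ℝ)) 0 t := hasDerivAt_const t 0
    have heq : (fun s : ℝ => max 0 s ^ 2) =ᶠ[nhds t] fun _ => (0 : ℝ) := by
      filter_upwards [eventually_lt_nhds ht] with s hs
      rw [max_eq_left hs.le]; ring
    have := h0.congr_of_eventuallyEq heq
    rw [max_eq_left ht.le, mul_zero]; exact this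
  · rw [max_self, mul_zero]
    rw [hasDerivAt_iff_tendsto_slope]
    apply squeeze_zero_norm' (a := fun s => |s|)
    · filter_upwards with s
      rcases le_or_gt s 0 with hs | hs
      · simp [slope_def_field, max_eq_left hs, abs_nonneg]
      · have hslope : slope (fun s : ℝ => max 0 s ^ 2) 0 s = s := by
          rw [slope_def_field, max_eq_right hs.le, max_self]
          field_simp
          ring
        rw [hslope, Real.norm_eq_abs]
    · exact tendsto_abs_nhdsNE_zero.mono_right nhdsWithin_le_nhds
  · have h0 : HasDerivAt (fun s : ℝ => s ^ 2) (2 * t) t := by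
      simpa using (hasDerivAt_pow 2 t)
    have heq : (fun s : ℝ => max 0 s ^ 2) =ᶠ[nhds t] fun s => s ^ 2 := by
      filter_upwards [eventually_gt_nhds ht] with s hs
      rw [max_eq_right hs.le]
    have := h0.congr_of_eventuallyEq heq
    rw [max_eq_right ht.le]; exact this

lemma phi_eq (l r : ℝ) (hr : 0 < r) (u : ℝ) :
    l * max u (-l / r) + r / 2 * max u (-l / r) ^ 2
      = 1 / (2 * r) * (max 0 (l + r * u) ^ 2 - l ^ 2) := by
  rcases le_or_gt 0 (l + r * u) with h | h
  · have h1 : -l / r ≤ u := by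
      rw [div_le_iff₀ hr] at *; nlinarith
    rw [max_eq_left h1, max_eq_right h]
    field_simp
    ring
  · have h1 : u ≤ -l / r := by
      rw [le_div_iff₀ hr]; nlinarith
    rw [max_eq_right h1, max_eq_left h.le]
    field_simp
    ring

lemma phi_hasDerivAt (l r : ℝ) (hr : 0 < r) (u : ℝ) :
    HasDerivAt (fun v : ℝ => l * max v (-l / r) + r / 2 * max v (-l / r) ^ 2)
      (max 0 (l + r * u)) u := by
  have haff : HasDerivAt (fun v : ℝ => l + r * v) r u := by
    simpa using ((hasDerivAt_id u).const_mul r).const_add l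
  have h1 : HasDerivAt (fun v : ℝ => max 0 (l + r * v) ^ 2)
      (2 * max 0 (l + r * u) * r) u := by
    have := (sqmax_hasDerivAt (l + r * u)).comp u haff; exact this
  have h2 := ((h1.sub_const (l ^ 2)).const_mul (1 / (2 * r)))
  have h3 := h2.congr_of_eventuallyEq (by
    filter_upwards with v
    exact (phi_eq l r hr v))
  have e : max 0 (l + r * u) = 1 / (2 * r) * (2 * max 0 (l + r * u) * r) := by
    field_simp
  rw [e]; exact h3

/-- Primal gradient of the universal augmented Lagrangian: if `f` and all `g_j` are
differentiable, then for fixed dual and penalty variables the map `δ ↦ L(δ, Λ, μ, P, p)` is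
differentiable everywhere, with gradient
`δ + Σ_{i,j} max{0, λ_{i,j} + ρ_{i,j}(g_j(x_i+δ) − b_j)}·∇g_j(x_i+δ)
   + Σ_i max{0, μ_i + ϱ_i(y·f(x_i+δ) − c)}·y·∇f(x_i+δ)`. -/
theorem stmt_8 {d n q : ℕ}
    (x : Fin n → EuclideanSpace ℝ (Fin d)) (y : ℝ) (hy : y = 1 ∨ y = -1)
    (f : EuclideanSpace ℝ (Fin d) → ℝ) (hf : Differentiable ℝ f)
    (g : Fin q → EuclideanSpace ℝ (Fin d) → ℝ) (hg : ∀ j, Differentiable ℝ (g j))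
    (b : Fin q → ℝ) (c : ℝ)
    (Λ : Fin n → Fin q → ℝ) (μ : Fin n → ℝ)
    (P : Fin n → Fin q → ℝ) (hP : ∀ i j, 0 < P i j)
    (p : Fin n → ℝ) (hp : ∀ i, 0 < p i)
    (L : EuclideanSpace ℝ (Fin d) → ℝ)
    (hL : ∀ δ : EuclideanSpace ℝ (Fin d),
      L δ = (1 / 2) * ‖δ‖ ^ 2
        + ∑ i, ∑ j, Λ i j * max (g j (x i + δ) - b j) (-Λ i j / P i j)
        + ∑ i, μ i * max (y * f (x i + δ) - c) (-μ i / p i)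
        + (1 / 2) * ∑ i, ∑ j, P i j * (max (g j (x i + δ) - b j) (-Λ i j / P i j)) ^ 2
        + (1 / 2) * ∑ i, p i * (max (y * f (x i + δ) - c) (-μ i / p i)) ^ 2) :
    ∀ δ : EuclideanSpace ℝ (Fin d),
      HasGradientAt L
        (δ + (∑ i, ∑ j, max 0 (Λ i j + P i j * (g j (x i + δ) - b j)) •
                gradient (g j) (x i + δ))
           + ∑ i, (max 0 (μ i + p i * (y * f (x i + δ) - c)) * y) •
                gradient f (x i + δ)) δ := by
  intro δ
  have hLfun : ∀ z : EuclideanSpace ℝ (Fin d), L z = (1 / 2) * ‖z‖ ^ 2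
      + ∑ i, ∑ j, (Λ i j * max (g j (x i + z) - b j) (-Λ i j / P i j)
          + P i j / 2 * max (g j (x i + z) - b j) (-Λ i j / P i j) ^ 2)
      + ∑ i, (μ i * max (y * f (x i + z) - c) (-μ i / p i)
          + p i / 2 * max (y * f (x i + z) - c) (-μ i / p i) ^ 2) := by
    intro z
    rw [hL z]
    simp only [Finset.sum_add_distrib]
    have hT1 : ((1:ℝ)/2) * ∑ i, ∑ j, P i j * (max (g j (x i + z) - b j) (-Λ i j / P i j)) ^ 2
        = ∑ i, ∑ j, P i j / 2 * (max (g j (x i + z) - b j) (-Λ i j / P i j)) ^ 2 := by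
      rw [Finset.mul_sum]
      refine Finset.sum_congr rfl fun i _ => ?_
      rw [Finset.mul_sum]
      exact Finset.sum_congr rfl fun j _ => by ring
    have hT2 : ((1:ℝ)/2) * ∑ i, p i * (max (y * f (x i + z) - c) (-μ i / p i)) ^ 2
        = ∑ i, p i / 2 * (max (y * f (x i + z) - c) (-μ i / p i)) ^ 2 := by
      rw [Finset.mul_sum]
      exact Finset.sum_congr rfl fun i _ => by ring
    rw [hT1, hT2]
    ring
  -- derivative of the squared-norm part
  have hsq : HasFDerivAt (fun z : EuclideanSpace ℝ (Fin d) => (1 / 2) * ‖z‖ ^ 2)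
      (InnerProductSpace.toDual ℝ (EuclideanSpace ℝ (Fin d)) δ) δ := by
    have h := (hasFDerivAt_id (𝕜 := ℝ) δ).norm_sq.const_mul (1 / 2)
    refine h.congr_fderiv ?_
    symm
    ext w
    simp [InnerProductSpace.toDual_apply_apply, real_inner_comm, two_smul]
    ring
  -- derivative of the constraint terms
  have hterm : ∀ i j, HasFDerivAt
      (fun z : EuclideanSpace ℝ (Fin d) => Λ i j * max (g j (x i + z) - b j) (-Λ i j / P i j)
          + P i j / 2 * max (g j (x i + z) - b j) (-Λ i j / P i j) ^ 2)
      (max 0 (Λ i j + P i j * (g j (x i + δ) - b j)) • fderiv ℝ (g j) (x i + δ)) δ := by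
    intro i j
    have h1 : HasFDerivAt (fun z : EuclideanSpace ℝ (Fin d) => x i + z) (ContinuousLinearMap.id ℝ (EuclideanSpace ℝ (Fin d))) δ :=
      (hasFDerivAt_id δ).const_add (x i)
    have hu : HasFDerivAt (fun z : EuclideanSpace ℝ (Fin d) => g j (x i + z) - b j)
        (fderiv ℝ (g j) (x i + δ)) δ := by
      have h2 := ((hg j (x i + δ)).hasFDerivAt.comp δ h1).sub_const (b j)
      simpa using h2
    exact (phi_hasDerivAt (Λ i j) (P i j) (hP i j) _).comp_hasFDerivAt δ hu
  -- derivative of the classifier terms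
  have hterm2 : ∀ i, HasFDerivAt
      (fun z : EuclideanSpace ℝ (Fin d) => μ i * max (y * f (x i + z) - c) (-μ i / p i)
          + p i / 2 * max (y * f (x i + z) - c) (-μ i / p i) ^ 2)
      ((max 0 (μ i + p i * (y * f (x i + δ) - c)) * y) • fderiv ℝ f (x i + δ)) δ := by
    intro i
    have h1 : HasFDerivAt (fun z : EuclideanSpace ℝ (Fin d) => x i + z) (ContinuousLinearMap.id ℝ (EuclideanSpace ℝ (Fin d))) δ :=
      (hasFDerivAt_id δ).const_add (x i)
    have hu : HasFDerivAt (fun z : EuclideanSpace ℝ (Fin d) => y * f (x i + z) - c)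
        (y • fderiv ℝ f (x i + δ)) δ := by
      have h2 := (((hf (x i + δ)).hasFDerivAt.comp δ h1).const_mul y).sub_const c
      simpa using h2
    have h3 := (phi_hasDerivAt (μ i) (p i) (hp i) _).comp_hasFDerivAt δ hu
    have h4 : (max 0 (μ i + p i * (y * f (x i + δ) - c)) * y) • fderiv ℝ f (x i + δ)
        = max 0 (μ i + p i * (y * f (x i + δ) - c)) • (y • fderiv ℝ f (x i + δ)) := by
      rw [smul_smul]
    rw [h4]
    exact h3
  have hsum1 := HasFDerivAt.sum (fun i (_ : i ∈ Finset.univ) =>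
    HasFDerivAt.sum (fun j (_ : j ∈ Finset.univ) => hterm i j))
  have hsum2 := HasFDerivAt.sum (fun i (_ : i ∈ Finset.univ) => hterm2 i)
  have htot := (hsq.add hsum1).add hsum2
  have hLd := htot.congr_of_eventuallyEq
    (Filter.Eventually.of_forall fun z => (hLfun z).trans (by
      simp only [Pi.add_apply, Finset.sum_apply]))
  rw [hasGradientAt_iff_hasFDerivAt]
  refine hLd.congr_fderiv ?_
  symm
  simp only [map_add, map_sum, map_smul, gradient,
    LinearIsometryEquiv.apply_symm_apply]
end
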